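/- Fix r ≤ n, orthonormal vectors u₁, …, u_r ∈ ℝⁿ, and d ≥ 2. Identify each real polynomial φ in r variables of total degree ≤ d with its coefficient vector c ∈ ℝ^N in the monomial basis, where N = binom(r+d, d). For such φ set F_φ(x) := φ(⟨u₁, x⟩, …, ⟨u_r, x⟩), define sym(F_φ) := { (S, v) ∈ ℝ^{n×n} × ℝⁿ : Sᵀ = −S and DF_φ(x)(S x + v) = 0 for all x ∈ ℝⁿ }, and let 𝔤_lin := { (S, v) : Sᵀ = −S, S u_i = 0 for all i, and ⟨u_i, v⟩ = 0 for all i }. Then the set of coefficient vectors c ∈ ℝ^N for which sym(F_φ) ≠ 𝔤_lin has Lebesgue measure zero. -/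

import Mathlib

set_option maxRecDepth 8000


open Matrix MeasureTheory

/-- The index type for the monomial basis of polynomials in `r` variables of total degree
at most `d`: a monomial of degree `k ≤ d` is a multiset of `k` variables.  This type has
exactly `(r+d).choose d` elements. -/
abbrev MonIdx (r d : ℕ) := Σ k : Fin (d + 1), Sym (Fin r) k

/-- The polynomial function in `r` variables determined by a coefficient vector in the
monomial basis: `φ_c(z) = Σ_{monomials p} c_p · Π_{i ∈ p} z_i`. -/
noncomputable def polyOfCoeffs {r d : ℕ} (coeffs : MonIdx r d → ℝ) :
    (Fin r → ℝ) → ℝ :=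
  fun z => ∑ p : MonIdx r d, coeffs p * ((p.2 : Multiset (Fin r)).map z).prod

/-- The linear-feature function `F(x) = φ(⟨u₁,x⟩, …, ⟨u_r,x⟩)`. -/
noncomputable def linFeat {n r : ℕ} (u : Fin r → Fin n → ℝ)
    (φ : (Fin r → ℝ) → ℝ) : (Fin n → ℝ) → ℝ :=
  fun x => φ (fun i => ∑ j, u i j * x j)

/-- The infinitesimal `SE(n)`-symmetries of a scalar function `G` on `ℝⁿ`: pairs `(S, v)`
with `S` skew-symmetric and `DG(x)(Sx + v) = 0` for all `x`. -/
def symSet {n : ℕ} (G : (Fin n → ℝ) → ℝ) :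
    Set (Matrix (Fin n) (Fin n) ℝ × (Fin n → ℝ)) :=
  {p | (p.1)ᵀ = -p.1 ∧ ∀ x : Fin n → ℝ, fderiv ℝ G x (p.1.mulVec x + p.2) = 0}

/-- The subalgebra `𝔤_lin = {(S,v) : Sᵀ = −S, S uᵢ = 0 ∀i, ⟨uᵢ, v⟩ = 0 ∀i}`. -/
def gLin {n r : ℕ} (u : Fin r → Fin n → ℝ) :
    Set (Matrix (Fin n) (Fin n) ℝ × (Fin n → ℝ)) :=
  {p | (p.1)ᵀ = -p.1 ∧ (∀ i : Fin r, p.1.mulVec (u i) = 0) ∧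
    ∀ i : Fin r, ∑ j, u i j * p.2 j = 0}



lemma continuous_mvpoly_eval {σ : Type*} (p : MvPolynomial σ ℝ) :
    Continuous fun x : σ → ℝ => MvPolynomial.eval x p := by
  simp only [MvPolynomial.eval_eq]
  exact continuous_finset_sum _ fun d _ => Continuous.mul continuous_const
    (continuous_finset_prod _ fun i _ => ((continuous_apply i).pow _))

lemma mvpoly_zero_null_fin : ∀ (n : ℕ) (p : MvPolynomial (Fin n) ℝ), p ≠ 0 →
    volume {x : Fin n → ℝ | MvPolynomial.eval x p = 0} = 0 := by
  intro n
  induction n with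
  | zero =>
    intro p hp
    obtain ⟨a, rfl⟩ := MvPolynomial.C_surjective (Fin 0) p
    have ha : a ≠ 0 := fun h => hp (by simp [h])
    have : {x : Fin 0 → ℝ | MvPolynomial.eval x (MvPolynomial.C a) = 0} = ∅ := by
      ext x; simp [ha]
    rw [this, measure_empty]
  | succ n ih =>
    intro p hp
    set q := MvPolynomial.finSuccEquiv ℝ n p with hq
    have hq0 : q ≠ 0 := by
      simpa [hq] using (map_ne_zero_iff _ (MvPolynomial.finSuccEquiv ℝ n).injective).mpr hp
    have hlead : q.leadingCoeff ≠ 0 := Polynomial.leadingCoeff_ne_zero.mpr hq0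
    -- the set in ℝ^n × ℝ coordinates
    set Z : Set (Fin (n+1) → ℝ) := {x | MvPolynomial.eval x p = 0} with hZ
    have hZm : MeasurableSet Z :=
      (isClosed_eq (continuous_mvpoly_eval p) continuous_const).measurableSet
    -- measure-preserving equivalence (Fin (n+1) → ℝ) ≃ ℝ × (Fin n → ℝ)
    have e := MeasureTheory.volume_preserving_piFinSuccAbove (fun _ : Fin (n+1) => ℝ) 0
    set E := MeasurableEquiv.piFinSuccAbove (fun _ : Fin (n+1) => ℝ) 0 with hE
    have hvol : volume Z = (volume.prod volume) (E.symm ⁻¹' Z) := by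
      have hS : MeasurableSet (E.symm ⁻¹' Z) := E.symm.measurable hZm
      have h1 := e.measure_preimage hS.nullMeasurableSet
      have hZ2 : E ⁻¹' (E.symm ⁻¹' Z) = Z := by ext x; simp
      rw [hZ2, Measure.volume_eq_prod] at h1
      exact h1
    rw [hvol]
    have hswap : (volume.prod volume) (E.symm ⁻¹' Z)
        = (volume.prod volume) (Prod.swap ⁻¹' (E.symm ⁻¹' Z)) := by
      rw [← MeasureTheory.Measure.prod_swap]
      rw [MeasureTheory.Measure.map_apply measurable_swap (E.symm.measurable hZm)]
    rw [hswap]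
    have hmeas : MeasurableSet (Prod.swap ⁻¹' (E.symm ⁻¹' Z)) :=
      measurable_swap (E.symm.measurable hZm)
    rw [MeasureTheory.Measure.measure_prod_null hmeas]
    have hbad := ih q.leadingCoeff hlead
    have hae : ∀ᵐ s : Fin n → ℝ, MvPolynomial.eval s q.leadingCoeff ≠ 0 := by
      have hset : {s : Fin n → ℝ | ¬ MvPolynomial.eval s q.leadingCoeff ≠ 0}
          = {s : Fin n → ℝ | MvPolynomial.eval s q.leadingCoeff = 0} := by
        ext s
        exact not_not
      rw [ae_iff, hset]
      exact hbad
    filter_upwards [hae] with s hs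
    have hqs : q.map (MvPolynomial.eval s) ≠ 0 := by
      intro h
      apply hs
      have h2 : Polynomial.coeff (q.map (MvPolynomial.eval s)) q.natDegree = 0 := by
        rw [h, Polynomial.coeff_zero]
      rw [Polynomial.coeff_map] at h2
      rw [Polynomial.leadingCoeff]
      exact h2
    have hsub : (Prod.mk s ⁻¹' (Prod.swap ⁻¹' (E.symm ⁻¹' Z)))
        ⊆ {y : ℝ | Polynomial.IsRoot (q.map (MvPolynomial.eval s)) y} := by
      intro y hy
      simp only [Set.mem_preimage, Set.mem_setOf_eq, hZ] at hy ⊢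
      have hsw : (s, y).swap = (y, s) := rfl
      rw [hsw] at hy
      have hcons : E.symm (y, s) = Fin.cons y s := by
        ext i
        simp [hE, MeasurableEquiv.piFinSuccAbove_symm_apply]
      rw [hcons, MvPolynomial.eval_eq_eval_mv_eval'] at hy
      exact hy
    exact measure_mono_null hsub ((Polynomial.finite_setOf_isRoot hqs).measure_zero _)

lemma mvpoly_zero_null {σ : Type*} [Fintype σ] [DecidableEq σ] (p : MvPolynomial σ ℝ)
    (hp : p ≠ 0) : volume {x : σ → ℝ | MvPolynomial.eval x p = 0} = 0 := by
  obtain ⟨e⟩ : Nonempty (σ ≃ Fin (Fintype.card σ)) := ⟨Fintype.equivFin σ⟩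
  have hren : MvPolynomial.rename e p ≠ 0 :=
    fun h => hp (MvPolynomial.rename_injective e e.injective (by simpa using h))
  have h0 := mvpoly_zero_null_fin _ _ hren
  have e2 := MeasureTheory.volume_measurePreserving_piCongrLeft (fun _ : Fin (Fintype.card σ) => ℝ) e
  set E := MeasurableEquiv.piCongrLeft (fun _ : Fin (Fintype.card σ) => ℝ) e with hE
  have hZm : MeasurableSet {x : Fin (Fintype.card σ) → ℝ |
      MvPolynomial.eval x (MvPolynomial.rename e p) = 0} :=
    (isClosed_eq (continuous_mvpoly_eval _) continuous_const).measurableSet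
  have key : {x : σ → ℝ | MvPolynomial.eval x p = 0}
      = E ⁻¹' {x : Fin (Fintype.card σ) → ℝ | MvPolynomial.eval x (MvPolynomial.rename e p) = 0} := by
    ext c
    simp only [Set.mem_setOf_eq, Set.mem_preimage, MvPolynomial.eval_rename]
    have : (E c) ∘ e = c := by
      ext i
      simp [hE, MeasurableEquiv.coe_piCongrLeft, Equiv.piCongrLeft_apply_apply]
    rw [this]
  rw [key, e2.measure_preimage hZm.nullMeasurableSet]
  exact h0

/-- product of coordinates over a multiset -/
def monProd {r : ℕ} (m : Multiset (Fin r)) : (Fin r → ℝ) → ℝ :=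
  fun z => (m.map z).prod

lemma differentiable_monProd {r : ℕ} (m : Multiset (Fin r)) :
    Differentiable ℝ (monProd m) := by
  induction m using Multiset.induction_on with
  | empty =>
    have h0 : monProd (0 : Multiset (Fin r)) = fun _ => (1:ℝ) := rfl
    rw [h0]
    exact differentiable_const _
  | cons a m ih =>
    have : monProd (a ::ₘ m) = fun z => z a * monProd m z := by
      funext z
      simp [monProd]
    rw [this]
    exact (differentiable_apply a).mul ih

lemma polyOfCoeffs_eq {r d : ℕ} (c : MonIdx r d → ℝ) :
    polyOfCoeffs c = fun z => ∑ p : MonIdx r d, c p * monProd (p.2 : Multiset (Fin r)) z := rfl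

lemma differentiable_polyOfCoeffs {r d : ℕ} (c : MonIdx r d → ℝ) :
    Differentiable ℝ (polyOfCoeffs c) := by
  rw [polyOfCoeffs_eq]
  exact Differentiable.fun_sum fun p _ => (differentiable_monProd _).const_mul _

lemma fderiv_polyOfCoeffs {r d : ℕ} (c : MonIdx r d → ℝ) (z : Fin r → ℝ) :
    fderiv ℝ (polyOfCoeffs c) z
      = ∑ p : MonIdx r d, c p • fderiv ℝ (monProd (p.2 : Multiset (Fin r))) z := by
  rw [polyOfCoeffs_eq]
  rw [fderiv_fun_sum (fun p _ => ((differentiable_monProd _).const_mul _).differentiableAt)]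
  congr 1
  funext p
  exact fderiv_const_mul (differentiable_monProd _).differentiableAt _

/-- index type for our square matrix: pairs (i,j) with i<j, plus single indices -/
abbrev PairIdx (r : ℕ) := {p : Fin r × Fin r // p.1 < p.2}
abbrev JIdx (r : ℕ) := PairIdx r ⊕ Fin r

/-- evaluation points -/
noncomputable def ptJ {r : ℕ} : JIdx r → (Fin r → ℝ)
  | Sum.inl p => Pi.single p.1.1 1 + Pi.single p.1.2 1
  | Sum.inr k => Pi.single k 1

/-- skew matrix part of basis element -/
def matJ {r : ℕ} : JIdx r → Matrix (Fin r) (Fin r) ℝ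
  | Sum.inl p => fun a b => (if a = p.1.1 ∧ b = p.1.2 then 1 else 0)
      - (if a = p.1.2 ∧ b = p.1.1 then 1 else 0)
  | Sum.inr _ => 0

/-- vector part of basis element -/
noncomputable def vecJ {r : ℕ} : JIdx r → (Fin r → ℝ)
  | Sum.inl _ => 0
  | Sum.inr k => Pi.single k 1

noncomputable def dirJ {r : ℕ} (z j : JIdx r) : Fin r → ℝ :=
  (matJ j).mulVec (ptJ z) + vecJ j

noncomputable def Amat (r d : ℕ) (c : MonIdx r d → ℝ) : Matrix (JIdx r) (JIdx r) ℝ :=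
  fun z j => fderiv ℝ (polyOfCoeffs c) (ptJ z) (dirJ z j)

noncomputable def Kconst (r d : ℕ) (p : MonIdx r d) (z j : JIdx r) : ℝ :=
  fderiv ℝ (monProd (p.2 : Multiset (Fin r))) (ptJ z) (dirJ z j)

lemma Amat_eq (r d : ℕ) (c : MonIdx r d → ℝ) (z j : JIdx r) :
    Amat r d c z j = ∑ p : MonIdx r d, c p * Kconst r d p z j := by
  unfold Amat Kconst
  rw [fderiv_polyOfCoeffs]
  rw [ContinuousLinearMap.sum_apply]
  simp

noncomputable def APoly (r d : ℕ) : Matrix (JIdx r) (JIdx r) (MvPolynomial (MonIdx r d) ℝ) :=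
  fun z j => ∑ p : MonIdx r d, MvPolynomial.C (Kconst r d p z j) * MvPolynomial.X p

lemma eval_APoly (r d : ℕ) (c : MonIdx r d → ℝ) :
    (APoly r d).map (MvPolynomial.eval c) = Amat r d c := by
  ext z j
  simp [APoly, Amat_eq, map_sum, mul_comm]

lemma eval_det_APoly (r d : ℕ) (c : MonIdx r d → ℝ) :
    MvPolynomial.eval c (APoly r d).det = (Amat r d c).det := by
  rw [RingHom.map_det]
  rw [RingHom.mapMatrix_apply, eval_APoly]

lemma sum_smul_mulVec {r : ℕ} {ι : Type*} [Fintype ι] (c : ι → ℝ)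
    (A : ι → Matrix (Fin r) (Fin r) ℝ) (x : Fin r → ℝ) :
    ∑ j, c j • (A j).mulVec x = (∑ j, c j • A j).mulVec x := by
  ext k
  simp only [Finset.sum_apply, Pi.smul_apply, smul_eq_mul, Matrix.mulVec, dotProduct,
    Matrix.sum_apply, Matrix.smul_apply, Finset.mul_sum, Finset.sum_mul]
  rw [Finset.sum_comm]
  exact Finset.sum_congr rfl fun _ _ => Finset.sum_congr rfl fun _ _ => (mul_assoc _ _ _).symm

lemma skew_decomp {r : ℕ} (M : Matrix (Fin r) (Fin r) ℝ) (hM : Mᵀ = -M) :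
    ∑ p : PairIdx r, M p.1.1 p.1.2 • matJ (r := r) (Sum.inl p) = M := by
  have hMs : ∀ a b, M b a = - M a b := by
    intro a b
    have := congrFun (congrFun hM a) b
    simpa [Matrix.transpose_apply] using this
  ext a b
  simp only [Matrix.sum_apply, Matrix.smul_apply, smul_eq_mul]
  simp only [matJ]
  rcases lt_trichotomy a b with hab | hab | hab
  · rw [Finset.sum_eq_single (⟨(a, b), hab⟩ : PairIdx r)]
    · simp [hab.ne]
    · intro p _ hp
      have h1 : ¬(a = p.1.1 ∧ b = p.1.2) := by
        rintro ⟨rfl, rfl⟩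
        exact hp (by ext <;> rfl)
      have h2 : ¬(a = p.1.2 ∧ b = p.1.1) := by
        rintro ⟨rfl, rfl⟩
        exact absurd (lt_trans p.2 hab) (lt_irrefl _)
      simp [h1, h2]
    · intro h
      exact absurd (Finset.mem_univ _) h
  · subst hab
    have hdiag : M a a = 0 := by
      have := hMs a a
      linarith
    rw [hdiag]
    apply Finset.sum_eq_zero
    intro p _
    have h1 : ¬(a = p.1.1 ∧ a = p.1.2) := by
      rintro ⟨rfl, h⟩
      exact absurd p.2 (by rw [← h]; exact lt_irrefl _)
    have h2 : ¬(a = p.1.2 ∧ a = p.1.1) := by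
      rintro ⟨h, rfl⟩
      exact absurd p.2 (by rw [← h]; exact lt_irrefl _)
    simp [h1, h2]
  · rw [Finset.sum_eq_single (⟨(b, a), hab⟩ : PairIdx r)]
    · simp [hab.ne', hMs a b]
    · intro p _ hp
      have h1 : ¬(a = p.1.1 ∧ b = p.1.2) := by
        rintro ⟨rfl, rfl⟩
        exact absurd (lt_trans p.2 hab) (lt_irrefl _)
      have h2 : ¬(a = p.1.2 ∧ b = p.1.1) := by
        rintro ⟨rfl, rfl⟩
        exact hp (by ext <;> rfl)
      simp [h1, h2]
    · intro h
      exact absurd (Finset.mem_univ _) h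

lemma vec_decomp {r : ℕ} (w : Fin r → ℝ) :
    ∑ k : Fin r, w k • vecJ (r := r) (Sum.inr k) = w := by
  ext a
  simp only [Finset.sum_apply, Pi.smul_apply, vecJ, smul_eq_mul, Pi.single_apply]
  simp [Finset.sum_ite_eq']

lemma kernel_lemma {r d : ℕ} (c : MonIdx r d → ℝ) (hdet : (Amat r d c).det ≠ 0)
    (M : Matrix (Fin r) (Fin r) ℝ) (hM : Mᵀ = -M) (w : Fin r → ℝ)
    (h : ∀ z : Fin r → ℝ, fderiv ℝ (polyOfCoeffs c) z (M.mulVec z + w) = 0) :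
    M = 0 ∧ w = 0 := by
  set coords : JIdx r → ℝ := Sum.elim (fun p => M p.1.1 p.1.2) w with hcoords
  have hmul : (Amat r d c).mulVec coords = 0 := by
    funext z
    have hmat : (∑ j : JIdx r, coords j • matJ (r := r) j) = M := by
      rw [Fintype.sum_sum_type]
      simp only [hcoords, Sum.elim_inl, Sum.elim_inr]
      have h0 : ∑ k : Fin r, w k • matJ (r := r) (Sum.inr k) = 0 := by
        simp [matJ]
      rw [h0, add_zero]
      exact skew_decomp M hM
    have hvec : (∑ j : JIdx r, coords j • vecJ (r := r) j) = w := by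
      rw [Fintype.sum_sum_type]
      simp only [hcoords, Sum.elim_inl, Sum.elim_inr]
      have h0 : ∑ p : PairIdx r, M p.1.1 p.1.2 • vecJ (r := r) (Sum.inl p) = 0 := by
        simp [vecJ]
      rw [h0, zero_add]
      exact vec_decomp w
    have hdir : ∑ j : JIdx r, coords j • dirJ z j = M.mulVec (ptJ z) + w := by
      unfold dirJ
      rw [Finset.sum_congr rfl (fun j _ => smul_add (coords j) _ _), Finset.sum_add_distrib]
      rw [sum_smul_mulVec, hmat, hvec]
    have : (Amat r d c).mulVec coords z
        = fderiv ℝ (polyOfCoeffs c) (ptJ z) (∑ j : JIdx r, coords j • dirJ z j) := by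
      rw [map_sum]
      simp only [_root_.map_smul]
      simp only [Matrix.mulVec, dotProduct, Amat]
      exact Finset.sum_congr rfl fun j _ => by rw [mul_comm]; rfl
    rw [Pi.zero_apply, this, hdir]
    exact h (ptJ z)
  have hc0 : coords = 0 := Matrix.eq_zero_of_mulVec_eq_zero hdet hmul
  constructor
  · ext a b
    have hMs : ∀ a b, M b a = - M a b := by
      intro a b
      have := congrFun (congrFun hM a) b
      simpa [Matrix.transpose_apply] using this
    rcases lt_trichotomy a b with hab | hab | hab
    · have := congrFun hc0 (Sum.inl ⟨(a, b), hab⟩)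
      simpa [hcoords] using this
    · subst hab
      have := hMs a a
      simp only [Matrix.zero_apply]
      linarith
    · have := congrFun hc0 (Sum.inl ⟨(b, a), hab⟩)
      simp only [hcoords, Sum.elim_inl, Pi.zero_apply] at this
      simp only [Matrix.zero_apply]
      rw [hMs b a, this, neg_zero]
  · ext k
    have := congrFun hc0 (Sum.inr k)
    simpa [hcoords] using this

noncomputable def Plin {n r : ℕ} (u : Fin r → Fin n → ℝ) :
    (Fin n → ℝ) →L[ℝ] (Fin r → ℝ) :=
  ContinuousLinearMap.pi (fun i => ∑ j, u i j • ContinuousLinearMap.proj j)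

lemma Plin_apply {n r : ℕ} (u : Fin r → Fin n → ℝ) (x : Fin n → ℝ) :
    Plin u x = (Matrix.of u).mulVec x := by
  funext i
  simp [Plin, Matrix.mulVec, dotProduct]

lemma fderiv_linFeat {n r : ℕ} (u : Fin r → Fin n → ℝ) (φ : (Fin r → ℝ) → ℝ)
    (hφ : Differentiable ℝ φ) (x : Fin n → ℝ) (y : Fin n → ℝ) :
    fderiv ℝ (linFeat u φ) x y
      = fderiv ℝ φ ((Matrix.of u).mulVec x) ((Matrix.of u).mulVec y) := by
  have h1 : linFeat u φ = φ ∘ (Plin u) := by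
    funext x
    unfold linFeat
    show φ _ = φ (Plin u x)
    rw [Plin_apply]
    rfl
  rw [h1, fderiv_comp x hφ.differentiableAt (Plin u).differentiableAt,
    (Plin u).fderiv]
  simp only [ContinuousLinearMap.coe_comp', Function.comp_apply, Plin_apply]

lemma symSet_eq_gLin {n r d : ℕ} (u : Fin r → Fin n → ℝ)
    (hu : ∀ i j : Fin r, (∑ k, u i k * u j k) = if i = j then (1 : ℝ) else 0)
    (c : MonIdx r d → ℝ) (hdet : (Amat r d c).det ≠ 0) :
    symSet (linFeat u (polyOfCoeffs c)) = gLin u := by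
  set φ := polyOfCoeffs c with hφdef
  have hφ : Differentiable ℝ φ := differentiable_polyOfCoeffs c
  set U : Matrix (Fin r) (Fin n) ℝ := Matrix.of u with hU
  have hUU : U * Uᵀ = 1 := by
    ext i k
    simp only [Matrix.mul_apply, Matrix.transpose_apply, Matrix.one_apply, hU, Matrix.of_apply]
    exact hu i k
  ext ⟨S, v⟩
  constructor
  · rintro ⟨hS, hder⟩
    have hs : ∀ a b, S a b = -S b a := by
      intro a b
      have := congrFun (congrFun hS b) a
      simpa [Matrix.transpose_apply] using this
    have hder' : ∀ x, fderiv ℝ φ (U.mulVec x) ((U * S).mulVec x + U.mulVec v) = 0 := by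
      intro x
      have := hder x
      rw [fderiv_linFeat u φ hφ] at this
      rw [← this]
      congr 1
      rw [Matrix.mulVec_add, ← Matrix.mulVec_mulVec]
    set M : Matrix (Fin r) (Fin r) ℝ := U * S * Uᵀ with hM
    set w : Fin r → ℝ := U.mulVec v with hw
    have hMskew : Mᵀ = -M := by
      have hSt : Sᵀ = -S := hS
      rw [hM]
      simp only [Matrix.transpose_mul, Matrix.transpose_transpose, hSt, Matrix.mul_neg,
        Matrix.neg_mul, Matrix.mul_assoc]
    have claim1 : ∀ z : Fin r → ℝ, fderiv ℝ φ z (M.mulVec z + w) = 0 := by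
      intro z
      have := hder' (Uᵀ.mulVec z)
      rw [Matrix.mulVec_mulVec z U Uᵀ, hUU, Matrix.one_mulVec] at this
      rw [Matrix.mulVec_mulVec z (U * S) Uᵀ] at this
      exact this
    obtain ⟨hM0, hw0⟩ := kernel_lemma c hdet M hMskew w claim1
    have claim2 : U * S = 0 := by
      have h2 : ∀ x₀ : Fin n → ℝ, (U * S).mulVec x₀ = 0 := by
        intro x₀
        have key : ∀ z : Fin r → ℝ,
            fderiv ℝ φ z ((0 : Matrix (Fin r) (Fin r) ℝ).mulVec z + (U * S).mulVec x₀) = 0 := by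
          intro z
          have h := hder' (Uᵀ.mulVec z + (x₀ - Uᵀ.mulVec (U.mulVec x₀)))
          have e1 : U.mulVec (Uᵀ.mulVec z + (x₀ - Uᵀ.mulVec (U.mulVec x₀))) = z := by
            rw [Matrix.mulVec_add, Matrix.mulVec_sub, Matrix.mulVec_mulVec z U Uᵀ,
              Matrix.mulVec_mulVec (U.mulVec x₀) U Uᵀ, hUU, Matrix.one_mulVec,
              Matrix.one_mulVec, sub_self, add_zero]
          have e2 : (U * S).mulVec (Uᵀ.mulVec z + (x₀ - Uᵀ.mulVec (U.mulVec x₀)))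
              = (U * S).mulVec x₀ := by
            rw [Matrix.mulVec_add, Matrix.mulVec_sub, Matrix.mulVec_mulVec z (U * S) Uᵀ,
              Matrix.mulVec_mulVec (U.mulVec x₀) (U * S) Uᵀ]
            have hz : (U * S) * Uᵀ = 0 := hM0
            rw [hz, Matrix.zero_mulVec, Matrix.zero_mulVec, zero_add, sub_zero]
          rw [e1, e2, hw0, add_zero] at h
          rw [Matrix.zero_mulVec, zero_add]
          exact h
        have := kernel_lemma c hdet 0 (by simp) _ key
        exact this.2
      ext i b
      have := congrFun (h2 (Pi.single b 1)) i
      simpa [Matrix.mulVec_single] using this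
    refine ⟨hS, ?_, ?_⟩
    · intro i
      have hSUt : S * Uᵀ = 0 := by
        have h1 : (U * S)ᵀ = 0 := by rw [claim2, Matrix.transpose_zero]
        rw [Matrix.transpose_mul, hS, Matrix.neg_mul] at h1
        have := neg_eq_zero.mp h1
        exact this
      have hui : u i = Uᵀ.mulVec (Pi.single i 1) := by
        funext j
        simp [Matrix.mulVec_single, hU]
      rw [hui, Matrix.mulVec_mulVec, hSUt, Matrix.zero_mulVec]
    · intro i
      have := congrFun hw0 i
      simpa [hw, Matrix.mulVec, dotProduct, hU] using this
  · rintro ⟨hS, hSu, hv⟩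
    refine ⟨hS, ?_⟩
    intro x
    rw [fderiv_linFeat u φ hφ]
    have hUS : U * S = 0 := by
      have hSUt : S * Uᵀ = 0 := by
        ext j i
        have := congrFun (hSu i) j
        simpa [Matrix.mul_apply, Matrix.mulVec, dotProduct, hU] using this
      have h1 : (S * Uᵀ)ᵀ = 0 := by rw [hSUt, Matrix.transpose_zero]
      rw [Matrix.transpose_mul, Matrix.transpose_transpose, hS, Matrix.mul_neg] at h1
      exact neg_eq_zero.mp h1
    have hzero : U.mulVec (S.mulVec x + v) = 0 := by
      rw [Matrix.mulVec_add, Matrix.mulVec_mulVec, hUS, Matrix.zero_mulVec, zero_add]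
      funext i
      simpa [Matrix.mulVec, dotProduct, hU] using hv i
    rw [hzero]
    exact (fderiv ℝ φ (U.mulVec x)).map_zero

section Witness
variable {r d : ℕ}

def lam (i : Fin r) : ℝ := (i : ℕ) + 1

lemma lam_pos (i : Fin r) : 0 < lam i := by unfold lam; positivity

lemma lam_lt {i j : Fin r} (h : i < j) : lam i < lam j := by
  unfold lam
  have : (i : ℕ) < (j : ℕ) := h
  have h' : ((i:ℕ):ℝ) < ((j:ℕ):ℝ) := Nat.cast_lt.mpr this
  linarith

def mon2 (hd : 2 ≤ d) (i : Fin r) : MonIdx r d :=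
  ⟨⟨2, by omega⟩, ⟨{i, i}, rfl⟩⟩

noncomputable def cW (hd : 2 ≤ d) : MonIdx r d → ℝ :=
  fun p => ∑ i : Fin r, if p = mon2 hd i then lam i else 0

lemma monProd_pair (i : Fin r) : monProd ({i, i} : Multiset (Fin r)) = fun v => v i * v i := by
  funext v
  simp [monProd]

lemma Kconst_mon2 (hd : 2 ≤ d) (i : Fin r) (z j : JIdx r) :
    Kconst r d (mon2 hd i) z j = 2 * (ptJ z i * dirJ z j i) := by
  unfold Kconst mon2
  have hm : (((⟨{i, i}, rfl⟩ : Sym (Fin r) 2)) : Multiset (Fin r)) = {i, i} := rfl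
  rw [show (((⟨⟨2, by omega⟩, ⟨{i,i}, rfl⟩⟩ : MonIdx r d).2 : Multiset (Fin r))) = {i,i} from rfl]
  rw [monProd_pair]
  have hproj : HasFDerivAt (fun v : Fin r → ℝ => v i)
      (ContinuousLinearMap.proj i : (Fin r → ℝ) →L[ℝ] ℝ) (ptJ z) :=
    hasFDerivAt_apply i (ptJ z)
  have h2 := hproj.fun_mul hproj
  rw [h2.fderiv]
  simp only [ContinuousLinearMap.add_apply, ContinuousLinearMap.smul_apply,
    ContinuousLinearMap.proj_apply, smul_eq_mul]
  ring

lemma Amat_cW (hd : 2 ≤ d) (z j : JIdx r) :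
    Amat r d (cW hd) z j = ∑ i : Fin r, lam i * (2 * (ptJ z i * dirJ z j i)) := by
  rw [Amat_eq]
  unfold cW
  rw [Finset.sum_congr rfl (fun p _ => Finset.sum_mul _ _ _)]
  rw [Finset.sum_comm]
  refine Finset.sum_congr rfl fun i _ => ?_
  have : ∀ p : MonIdx r d, (if p = mon2 hd i then lam i else 0) * Kconst r d p z j
      = if p = mon2 hd i then lam i * Kconst r d (mon2 hd i) z j else 0 := by
    intro p
    by_cases hp : p = mon2 hd i
    · subst hp; simp
    · simp [hp]
  rw [Finset.sum_congr rfl fun p _ => this p, Finset.sum_ite_eq' Finset.univ (mon2 hd i)]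
  simp [Kconst_mon2 hd i z j]

lemma matJ_diag (p' : PairIdx r) (k : Fin r) : matJ (r := r) (Sum.inl p') k k = 0 := by
  have h1 : ¬(k = p'.1.1 ∧ k = p'.1.2) := by
    rintro ⟨rfl, h⟩
    exact absurd p'.2 (by rw [← h]; exact lt_irrefl _)
  have h2 : ¬(k = p'.1.2 ∧ k = p'.1.1) := by
    rintro ⟨h, rfl⟩
    exact absurd p'.2 (by rw [← h]; exact lt_irrefl _)
  simp [matJ, h1, h2]

lemma matJ_pair (p p' : PairIdx r) :
    matJ (r := r) (Sum.inl p') p.1.1 p.1.2 = if p = p' then 1 else 0 := by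
  by_cases hpp : p = p'
  · subst hpp
    simp [matJ, ne_of_lt p.2]
  · have h1 : ¬(p.1.1 = p'.1.1 ∧ p.1.2 = p'.1.2) := by
      rintro ⟨h1, h2⟩
      exact hpp (Subtype.ext (Prod.ext h1 h2))
    have h2 : ¬(p.1.1 = p'.1.2 ∧ p.1.2 = p'.1.1) := by
      rintro ⟨h1, h2⟩
      have := p.2
      rw [h1, h2] at this
      exact absurd (lt_trans p'.2 this) (lt_irrefl _)
    simp [matJ, h1, h2, hpp]

lemma matJ_pair' (p p' : PairIdx r) :
    matJ (r := r) (Sum.inl p') p.1.2 p.1.1 = if p = p' then -1 else 0 := by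
  by_cases hpp : p = p'
  · subst hpp
    simp [matJ, ne_of_gt p.2]
  · have h1 : ¬(p.1.2 = p'.1.1 ∧ p.1.1 = p'.1.2) := by
      rintro ⟨h1, h2⟩
      have := p.2
      rw [h1, h2] at this
      exact absurd (lt_trans p'.2 this) (lt_irrefl _)
    have h2 : ¬(p.1.2 = p'.1.2 ∧ p.1.1 = p'.1.1) := by
      rintro ⟨h1, h2⟩
      exact hpp (Subtype.ext (Prod.ext h2 h1))
    simp [matJ, h1, h2, hpp]

lemma collapse {r' : ℕ} (a : Fin r') (g : Fin r' → ℝ) :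
    ∑ i : Fin r', (if i = a then (1:ℝ) else 0) * g i = g a := by
  rw [Finset.sum_eq_single a]
  · simp
  · intro b _ hb; simp [hb]
  · intro h; exact absurd (Finset.mem_univ _) h

end Witness

section Witness2
variable {r d : ℕ}

lemma Amat_cW_rr (hd : 2 ≤ d) (k m : Fin r) :
    Amat r d (cW hd) (Sum.inr k) (Sum.inr m)
      = Matrix.diagonal (fun k : Fin r => 2 * lam k) k m := by
  rw [Amat_cW]
  have hdir : ∀ i, dirJ (r := r) (Sum.inr k) (Sum.inr m) i = if i = m then 1 else 0 := by
    intro i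
    simp [dirJ, matJ, vecJ, Pi.single_apply]
  have hpt : ∀ i, ptJ (r := r) (Sum.inr k) i = if i = k then 1 else 0 := by
    intro i
    simp [ptJ, Pi.single_apply]
  rw [Finset.sum_congr rfl fun i _ => by rw [hdir i, hpt i]]
  have : ∀ i : Fin r, lam i * (2 * ((if i = k then (1:ℝ) else 0) * (if i = m then 1 else 0)))
      = (if i = k then (1:ℝ) else 0) * (if i = m then 2 * lam i else 0) := by
    intro i
    by_cases h1 : i = k <;> by_cases h2 : i = m <;> simp [h1, h2] <;> ring
  rw [Finset.sum_congr rfl fun i _ => this i, collapse k]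
  simp [Matrix.diagonal_apply, eq_comm]

lemma Amat_cW_rl (hd : 2 ≤ d) (k : Fin r) (p' : PairIdx r) :
    Amat r d (cW hd) (Sum.inr k) (Sum.inl p') = 0 := by
  rw [Amat_cW]
  have hpt : ∀ i, ptJ (r := r) (Sum.inr k) i = if i = k then 1 else 0 := by
    intro i
    simp [ptJ, Pi.single_apply]
  have hdir : ∀ i, dirJ (r := r) (Sum.inr k) (Sum.inl p') i
      = matJ (r := r) (Sum.inl p') i k := by
    intro i
    simp only [dirJ, vecJ, Pi.add_apply, Pi.zero_apply, add_zero, Matrix.mulVec,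
      dotProduct]
    rw [Finset.sum_congr rfl fun b _ => by rw [hpt b]]
    have : ∀ b : Fin r, matJ (r := r) (Sum.inl p') i b * (if b = k then (1:ℝ) else 0)
        = (if b = k then (1:ℝ) else 0) * matJ (r := r) (Sum.inl p') i b := fun b => mul_comm _ _
    rw [Finset.sum_congr rfl fun b _ => this b, collapse k]
  rw [Finset.sum_congr rfl fun i _ => by rw [hdir i, hpt i]]
  have : ∀ i : Fin r, lam i * (2 * ((if i = k then (1:ℝ) else 0) * matJ (r := r) (Sum.inl p') i k))
      = (if i = k then (1:ℝ) else 0) * (2 * lam i * matJ (r := r) (Sum.inl p') i k) := by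
    intro i
    by_cases h1 : i = k <;> simp [h1] <;> ring
  rw [Finset.sum_congr rfl fun i _ => this i, collapse k, matJ_diag]
  ring

lemma Amat_cW_ll (hd : 2 ≤ d) (p p' : PairIdx r) :
    Amat r d (cW hd) (Sum.inl p) (Sum.inl p')
      = Matrix.diagonal (fun p : PairIdx r => 2 * (lam p.1.1 - lam p.1.2)) p p' := by
  rw [Amat_cW]
  set a := p.1.1
  set b := p.1.2
  have hab : a < b := p.2
  have hpt : ∀ i, ptJ (r := r) (Sum.inl p) i
      = (if i = a then (1:ℝ) else 0) + (if i = b then 1 else 0) := by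
    intro i
    simp [ptJ, Pi.single_apply]
    rfl
  have hdir : ∀ i, dirJ (r := r) (Sum.inl p) (Sum.inl p') i
      = matJ (r := r) (Sum.inl p') i a + matJ (r := r) (Sum.inl p') i b := by
    intro i
    simp only [dirJ, vecJ, Pi.add_apply, Pi.zero_apply, add_zero, Matrix.mulVec,
      dotProduct]
    rw [Finset.sum_congr rfl fun c _ => by rw [hpt c]]
    rw [Finset.sum_congr rfl fun c _ => (mul_add (matJ (r := r) (Sum.inl p') i c) _ _)]
    rw [Finset.sum_add_distrib]
    congr 1
    · rw [Finset.sum_congr rfl fun c _ => mul_comm _ _, collapse a]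
    · rw [Finset.sum_congr rfl fun c _ => mul_comm _ _, collapse b]
  rw [Finset.sum_congr rfl fun i _ => by rw [hdir i, hpt i]]
  set Q : Fin r → ℝ := fun i => matJ (r := r) (Sum.inl p') i a + matJ (r := r) (Sum.inl p') i b
    with hQ
  have : ∀ i : Fin r, lam i * (2 * (((if i = a then (1:ℝ) else 0) + (if i = b then 1 else 0)) * Q i))
      = (if i = a then (1:ℝ) else 0) * (2 * lam i * Q i)
        + (if i = b then (1:ℝ) else 0) * (2 * lam i * Q i) := by
    intro i
    ring
  rw [Finset.sum_congr rfl fun i _ => this i, Finset.sum_add_distrib, collapse a, collapse b]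
  have hQa : Q a = if p = p' then 1 else 0 := by
    rw [hQ]
    simp only []
    rw [matJ_diag p' a, matJ_pair p p', zero_add]
  have hQb : Q b = if p = p' then -1 else 0 := by
    rw [hQ]
    simp only []
    rw [matJ_diag p' b, matJ_pair' p p', add_zero]
  rw [hQa, hQb, Matrix.diagonal_apply]
  by_cases hpp : p = p'
  · subst hpp
    simp only [if_pos rfl, if_true, eq_self_iff_true]
    norm_num
    ring
  · simp [hpp]

lemma det_Amat_cW (hd : 2 ≤ d) : (Amat r d (cW (r := r) hd)).det ≠ 0 := by
  have hblocks : Amat r d (cW (r := r) hd)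
      = Matrix.fromBlocks (Matrix.diagonal (fun p : PairIdx r => 2 * (lam p.1.1 - lam p.1.2)))
          (Matrix.of fun p m => Amat r d (cW (r := r) hd) (Sum.inl p) (Sum.inr m))
          0 (Matrix.diagonal (fun k : Fin r => 2 * lam k)) := by
    ext z j
    rcases z with p | k <;> rcases j with p' | m
    · rw [Matrix.fromBlocks_apply₁₁, Amat_cW_ll hd]
    · rw [Matrix.fromBlocks_apply₁₂]; rfl
    · rw [Matrix.fromBlocks_apply₂₁, Amat_cW_rl hd]; rfl
    · rw [Matrix.fromBlocks_apply₂₂, Amat_cW_rr hd]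
  rw [hblocks, Matrix.det_fromBlocks_zero₂₁, Matrix.det_diagonal, Matrix.det_diagonal]
  apply mul_ne_zero
  · rw [Finset.prod_ne_zero_iff]
    intro p _
    refine mul_ne_zero two_ne_zero ?_
    intro h
    have h1 := lam_lt (r := r) p.2
    have h2 := sub_eq_zero.mp h
    linarith
  · rw [Finset.prod_ne_zero_iff]
    intro k _
    have := lam_pos (r := r) k
    positivity

end Witness2

/-- For orthonormal `u₁, …, u_r` and `d ≥ 2`, the set of coefficient
vectors `c` of polynomials `φ` of total degree `≤ d` for which `sym(F_φ) ≠ 𝔤_lin` has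
Lebesgue measure zero. -/
theorem stmt14 (n r d : ℕ) (hrn : r ≤ n) (hd : 2 ≤ d) (u : Fin r → Fin n → ℝ)
    (hu : ∀ i j : Fin r, (∑ k, u i k * u j k) = if i = j then (1 : ℝ) else 0) :
    volume {coeffs : MonIdx r d → ℝ |
        symSet (linFeat u (polyOfCoeffs coeffs)) ≠ gLin u} = 0 := by
  have hsub : {coeffs : MonIdx r d → ℝ | symSet (linFeat u (polyOfCoeffs coeffs)) ≠ gLin u}
      ⊆ {c : MonIdx r d → ℝ | MvPolynomial.eval c (APoly r d).det = 0} := by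
    intro c hc
    simp only [Set.mem_setOf_eq] at hc ⊢
    by_contra h
    rw [eval_det_APoly] at h
    exact hc (symSet_eq_gLin u hu c h)
  refine measure_mono_null hsub ?_
  apply mvpoly_zero_null
  intro h0
  exact det_Amat_cW (r := r) hd (by rw [← eval_det_APoly, h0, map_zero])
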